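/- arXiv:math/0502249 — 3 statements merged into one kernel-verified Lean document; each statement's English description precedes it below -/
import Mathlib

section
/- Let X ⊆ ℝ² be the comb-like space X = ({0} ∪ {1/n : n ∈ ℕ, n ≥ 1}) × [0,1] ∪ [0,1] × {0} ∪ [0,1] × {1}, with basepoint p = (0,0). Then the path component of the constant loop in the loop space C_p(X) (with the uniform convergence topology) is not open in C_p(X). -/
open Topology Filter unitInterval

instance ZerothHomotopy.instTopologicalSpace' (X : Type*) [TopologicalSpace X] :
    TopologicalSpace (ZerothHomotopy X) :=
  inferInstanceAs (TopologicalSpace (Quotient _))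

/-- `X` is semilocally simply connected at `p`: some open neighborhood `U` of `p` is such
that every loop at `p` contained in `U` is null-homotopic (rel endpoints) in `X`. -/
def SemilocallySimplyConnectedAt (X : Type*) [TopologicalSpace X] (p : X) : Prop :=
  ∃ U : Set X, IsOpen U ∧ p ∈ U ∧
    ∀ γ : Path p p, (∀ t, γ t ∈ U) → γ.Homotopic (Path.refl p)

/-- The comb-like space of the paper. -/
def comb : Set (ℝ × ℝ) :=
  (({0} ∪ {x : ℝ | ∃ n : ℕ, 1 ≤ n ∧ x = 1 / n}) ×ˢ Set.Icc 0 1) ∪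
    (Set.Icc 0 1 ×ˢ ({0} : Set ℝ)) ∪ (Set.Icc 0 1 ×ˢ ({1} : Set ℝ))

lemma combP_mem : ((0 : ℝ), (0 : ℝ)) ∈ comb :=
  Or.inl (Or.inr ⟨⟨le_refl _, zero_le_one⟩, rfl⟩)

/-- The basepoint `p = (0,0)` of the comb space. -/
def combP : comb := ⟨(0, 0), combP_mem⟩

/-! ### Auxiliary: winding number mod 1 machinery on `AddCircle ℝ 1` -/

noncomputable def rep (z : AddCircle (1:ℝ)) : ℝ :=
  ((AddCircle.equivIco 1 (-(1/2)) z : Set.Ico _ _) : ℝ)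

lemma rep_coe {r : ℝ} (h₁ : -(1/2) ≤ r) (h₂ : r < 1/2) : rep (r : AddCircle (1:ℝ)) = r := by
  have hmem : r ∈ Set.Ico (-(1/2):ℝ) (-(1/2) + 1) := ⟨h₁, by linarith⟩
  have h : AddCircle.equivIco 1 (-(1/2)) (r : AddCircle (1:ℝ)) = ⟨r, hmem⟩ := by
    rw [Equiv.apply_eq_iff_eq_symm_apply]; rfl
  rw [rep, h]

lemma rep_zero : rep (0 : AddCircle (1:ℝ)) = 0 := by
  have := rep_coe (r := 0) (by norm_num) (by norm_num)
  simpa using this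

lemma coe_rep (z : AddCircle (1:ℝ)) : ((rep z : ℝ) : AddCircle (1:ℝ)) = z :=
  (AddCircle.equivIco 1 (-(1/2))).symm_apply_apply z

lemma norm_half : ‖((-(1/2) : ℝ) : AddCircle (1:ℝ))‖ = 1/2 := by
  rw [AddCircle.norm_eq]; norm_num [round_eq]

lemma rep_contAt {z : AddCircle (1:ℝ)} (h : ‖z‖ < 1/2) : ContinuousAt rep z := by
  have hz : z ≠ ((-(1/2):ℝ) : AddCircle (1:ℝ)) := by
    intro he; rw [he, norm_half] at h; linarith
  exact continuousAt_subtype_val.comp (AddCircle.continuousAt_equivIco 1 (-(1/2)) hz)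

/-- A loop in `ℝ/ℤ` that lifts to a function climbing by `1` is not null-homotopic. -/
lemma no_winding {z : AddCircle (1:ℝ)} (γ : Path z z) (u : I → ℝ) (hu : Continuous u)
    (hgu : ∀ t, γ t = ((u t : ℝ) : AddCircle (1:ℝ))) (h01 : u 1 - u 0 = 1) :
    ¬ γ.Homotopic (Path.refl z) := by
  rintro ⟨F⟩
  obtain ⟨δ, hδ0, hδ⟩ := Metric.uniformContinuous_iff.mp
    (CompactSpace.uniformContinuous_of_continuous F.continuous) (1/4) (by norm_num)
  obtain ⟨δ', hδ'0, hδ'⟩ := Metric.uniformContinuous_iff.mp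
    (CompactSpace.uniformContinuous_of_continuous hu) (1/4) (by norm_num)
  obtain ⟨N, hN⟩ := exists_nat_one_div_lt (lt_min hδ0 hδ'0)
  set M : ℕ := N + 1 with hM
  have hM0 : (0:ℝ) < M := by positivity
  have hMδ : 1 / (M:ℝ) < δ := by
    refine lt_of_lt_of_le ?_ (min_le_left δ δ')
    exact_mod_cast hN
  have hMδ' : 1 / (M:ℝ) < δ' := by
    refine lt_of_lt_of_le ?_ (min_le_right δ δ')
    exact_mod_cast hN
  set tt : ℕ → I := fun i => Set.projIcc 0 1 zero_le_one ((i : ℝ) / M) with htt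
  have httc : ∀ i ≤ M, ((tt i : I) : ℝ) = (i : ℝ) / M := by
    intro i hi
    have : ((i:ℝ)/M) ∈ Set.Icc (0:ℝ) 1 := by
      constructor
      · positivity
      · rw [div_le_one hM0]; exact_mod_cast hi
    simp [htt, Set.projIcc_of_mem, this]
  have htt0 : tt 0 = 0 := by
    apply Subtype.ext; rw [httc 0 (Nat.zero_le _)]; simp
  have httM : tt M = 1 := by
    apply Subtype.ext; rw [httc M le_rfl]; field_simp; simp
  have hdt : ∀ i < M, dist (tt (i+1)) (tt i) = 1 / M := by
    intro i hi
    rw [Subtype.dist_eq, httc _ hi, httc _ (by omega), Real.dist_eq]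
    rw [div_sub_div_same]
    push_cast
    rw [add_sub_cancel_left, abs_of_pos (by positivity)]
  set W : I → ℝ := fun s => ∑ i ∈ Finset.range M, rep (F (s, tt (i+1)) - F (s, tt i)) with hW
  have hsmall : ∀ (s : I) (i : ℕ), i < M → ‖F (s, tt (i+1)) - F (s, tt i)‖ < 1/4 := by
    intro s i hi
    rw [← dist_eq_norm]
    apply hδ
    rw [Prod.dist_eq, hdt i hi]
    simp only [dist_self]
    rw [max_eq_right (by positivity)]
    exact hMδ
  have hWcont : Continuous W := by
    apply continuous_finset_sum
    intro i hi
    rw [Finset.mem_range] at hi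
    rw [continuous_iff_continuousAt]
    intro s
    have hin : Continuous fun s : I => F (s, tt (i+1)) - F (s, tt i) :=
      ((F.continuous.comp (continuous_id.prodMk continuous_const)).sub
        (F.continuous.comp (continuous_id.prodMk continuous_const)))
    show ContinuousAt (fun s : I => rep (F (s, tt (i+1)) - F (s, tt i))) s
    exact ContinuousAt.comp (g := rep) (f := fun s : I => F (s, tt (i+1)) - F (s, tt i))
      (rep_contAt (lt_trans (hsmall s i hi) (by norm_num))) hin.continuousAt
  have hWint : ∀ s : I, ∃ m : ℤ, W s = (m : ℝ) := by
    intro s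
    have hcast : ((W s : ℝ) : AddCircle (1:ℝ)) = 0 := by
      have hmapsum : ((W s : ℝ) : AddCircle (1:ℝ)) =
          ∑ i ∈ Finset.range M, ((rep (F (s, tt (i+1)) - F (s, tt i)) : ℝ) : AddCircle (1:ℝ)) :=
        map_sum (QuotientAddGroup.mk' _) _ _
      have : ((W s : ℝ) : AddCircle (1:ℝ)) =
          ∑ i ∈ Finset.range M, (F (s, tt (i+1)) - F (s, tt i)) := by
        rw [hmapsum]
        simp_rw [coe_rep]
      rw [this, Finset.sum_range_sub (fun i => F (s, tt i)), htt0, httM]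
      have h1 : F (s, (1:I)) = z := by
        have := F.eq_fst s (x := 1) (by simp)
        simpa [γ.target] using this
      have h0 : F (s, (0:I)) = z := by
        have := F.eq_fst s (x := 0) (by simp)
        simpa [γ.source] using this
      rw [h0, h1, sub_self]
    rw [AddCircle.coe_eq_zero_iff] at hcast
    obtain ⟨m, hm⟩ := hcast
    exact ⟨m, by simpa [zsmul_eq_mul] using hm.symm⟩
  have hW1 : W 1 = 0 := by
    rw [hW]
    apply Finset.sum_eq_zero
    intro i hi
    have h1 : F ((1:I), tt (i+1)) = z := F.map_one_left _
    have h0 : F ((1:I), tt i) = z := F.map_one_left _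
    rw [h1, h0, sub_self, rep_zero]
  have hW0 : W 0 = 1 := by
    have hWb : W 0 = ∑ i ∈ Finset.range M, rep (F ((0:I), tt (i+1)) - F ((0:I), tt i)) := rfl
    rw [hWb]
    have : ∀ i ∈ Finset.range M,
        rep (F ((0:I), tt (i+1)) - F ((0:I), tt i)) = u (tt (i+1)) - u (tt i) := by
      intro i hi
      rw [Finset.mem_range] at hi
      have h1' : F ((0:I), tt (i+1)) = γ (tt (i+1)) := F.map_zero_left _
      have h0' : F ((0:I), tt i) = γ (tt i) := F.map_zero_left _
      have h1 : F ((0:I), tt (i+1)) = ((u (tt (i+1)) : ℝ) : AddCircle (1:ℝ)) := by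
        rw [h1']; exact hgu _
      have h0 : F ((0:I), tt i) = ((u (tt i) : ℝ) : AddCircle (1:ℝ)) := by
        rw [h0']; exact hgu _
      rw [h1, h0, ← AddCircle.coe_sub]
      have habs : |u (tt (i+1)) - u (tt i)| < 1/4 := by
        rw [← Real.dist_eq]
        apply hδ'
        rw [hdt i hi]; exact hMδ'
      rw [abs_lt] at habs
      exact rep_coe (by linarith [habs.1]) (by linarith [habs.2])
    rw [Finset.sum_congr rfl this, Finset.sum_range_sub (fun i => u (tt i)), htt0, httM, h01]
  have hIVT : (1/2 : ℝ) ∈ Set.range W := by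
    apply intermediate_value_univ (1:I) (0:I) hWcont
    rw [hW1, hW0]
    norm_num
  obtain ⟨s, hs⟩ := hIVT
  obtain ⟨m, hm⟩ := hWint s
  rw [hm] at hs
  have : (2*m : ℤ) = 1 := by
    have : (2 * m : ℝ) = 1 := by rw [hs]; ring
    exact_mod_cast this
  omega

/-! ### Geometry of the comb -/

noncomputable def aval (n : ℕ) : ℝ := 1/(n+2:ℝ)
noncomputable def bval (n : ℕ) : ℝ := 1/(n+1:ℝ)
lemma aval_pos (n : ℕ) : 0 < aval n := by unfold aval; positivity
lemma bval_pos (n : ℕ) : 0 < bval n := by unfold bval; positivity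
lemma aval_lt_bval (n : ℕ) : aval n < bval n := by
  unfold aval bval
  rw [div_lt_div_iff₀ (by positivity) (by positivity)]
  linarith

noncomputable def cfun (t : ℝ) : ℝ := min (min (4*t) 1) (max (3 - 4*t) 0)
noncomputable def yfun (t : ℝ) : ℝ := max 0 (min (min (4*t - 1) 1) (4 - 4*t))

lemma cfun_cont : Continuous cfun := by unfold cfun; fun_prop
lemma yfun_cont : Continuous yfun := by unfold yfun; fun_prop
lemma cfun_nonneg {t : ℝ} (ht : 0 ≤ t) : 0 ≤ cfun t := by
  unfold cfun
  refine le_min (le_min (by linarith) zero_le_one) (le_max_right _ _)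
lemma cfun_le_one (t : ℝ) : cfun t ≤ 1 :=
  le_trans (min_le_left _ _) (min_le_right _ _)
lemma yfun_nonneg (t : ℝ) : 0 ≤ yfun t := le_max_left _ _
lemma yfun_le_one (t : ℝ) : yfun t ≤ 1 := by
  unfold yfun
  refine max_le zero_le_one (le_trans (min_le_left _ _) (min_le_right _ _))
lemma yfun_eq_zero {t : ℝ} (ht : t ≤ 1/4) : yfun t = 0 := by
  unfold yfun
  rw [max_eq_left]
  refine le_trans (min_le_left _ _) (le_trans (min_le_left _ _) (by linarith))
lemma cfun_eq_A {t : ℝ} (ht : t ≤ 1/4) : cfun t = min (4*t) 1 := by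
  unfold cfun
  exact min_eq_left (le_trans (min_le_right _ _) (le_trans (by linarith) (le_max_left _ _)))
lemma cfun_eq_one {t : ℝ} (h1 : 1/4 ≤ t) (h2 : t ≤ 1/2) : cfun t = 1 := by
  unfold cfun
  rw [min_eq_right (by linarith : (1:ℝ) ≤ 4*t)]
  exact min_eq_left (le_trans (by linarith : (1:ℝ) ≤ 3 - 4*t) (le_max_left _ _))
lemma yfun_eq_B {t : ℝ} (h1 : 1/4 ≤ t) (h2 : t ≤ 1/2) : yfun t = 4*t - 1 := by
  unfold yfun
  rw [min_eq_left (by linarith : 4*t - 1 ≤ 1), min_eq_left (by linarith : 4*t - 1 ≤ 4 - 4*t)]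
  exact max_eq_right (by linarith)
lemma yfun_eq_one {t : ℝ} (h1 : 1/2 ≤ t) (h2 : t ≤ 3/4) : yfun t = 1 := by
  unfold yfun
  rw [min_eq_right (by linarith : (1:ℝ) ≤ 4*t - 1), min_eq_left (by linarith : (1:ℝ) ≤ 4 - 4*t)]
  exact max_eq_right zero_le_one
lemma cfun_eq_C {t : ℝ} (h1 : 1/2 ≤ t) (h2 : t ≤ 3/4) : cfun t = 3 - 4*t := by
  unfold cfun
  rw [min_eq_right (by linarith : (1:ℝ) ≤ 4*t), max_eq_left (by linarith : (0:ℝ) ≤ 3 - 4*t)]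
  exact min_eq_right (by linarith)
lemma cfun_eq_zero {t : ℝ} (ht : 3/4 ≤ t) : cfun t = 0 := by
  unfold cfun
  rw [max_eq_right (by linarith : 3 - 4*t ≤ 0)]
  exact min_eq_right (le_min (by linarith) zero_le_one)
lemma yfun_eq_D {t : ℝ} (h1 : 3/4 ≤ t) (h2 : t ≤ 1) : yfun t = 4 - 4*t := by
  unfold yfun
  rw [min_eq_right (by linarith : (1:ℝ) ≤ 4*t - 1), min_eq_right (by linarith : 4 - 4*t ≤ 1)]
  exact max_eq_right (by linarith)
lemma cfun_zero : cfun 0 = 0 := by unfold cfun; norm_num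
lemma cfun_one : cfun 1 = 0 := cfun_eq_zero (by norm_num)
lemma yfun_zero : yfun 0 = 0 := yfun_eq_zero (by norm_num)
lemma yfun_one : yfun 1 = 0 := by unfold yfun; norm_num

lemma mem_comb_left {y : ℝ} (hy : y ∈ Set.Icc (0:ℝ) 1) : ((0:ℝ), y) ∈ comb :=
  Or.inl (Or.inl ⟨Or.inl rfl, hy⟩)

lemma memC {r : ℝ} (hr : r = 0 ∨ ∃ k : ℕ, r = bval k) (t : I) :
    (cfun t * r, yfun t) ∈ comb := by
  have ht0 : (0:ℝ) ≤ t := t.2.1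
  have ht1 : (t:ℝ) ≤ 1 := t.2.2
  have hr0 : 0 ≤ r := by
    rcases hr with rfl | ⟨k, rfl⟩
    · exact le_rfl
    · exact (bval_pos k).le
  have hr1 : r ≤ 1 := by
    rcases hr with rfl | ⟨k, rfl⟩
    · exact zero_le_one
    · unfold bval
      rw [div_le_one (by positivity)]
      linarith [Nat.cast_nonneg (α := ℝ) k]
  have hx : cfun t * r ∈ Set.Icc (0:ℝ) 1 :=
    ⟨mul_nonneg (cfun_nonneg ht0) hr0, mul_le_one₀ (cfun_le_one _) hr0 hr1⟩
  rcases le_or_gt (t:ℝ) (1/4) with h | h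
  · exact Or.inl (Or.inr ⟨hx, by rw [yfun_eq_zero h]; rfl⟩)
  rcases le_or_gt (t:ℝ) (1/2) with h2 | h2
  · refine Or.inl (Or.inl ⟨?_, ⟨yfun_nonneg _, yfun_le_one _⟩⟩)
    rw [cfun_eq_one h.le h2, one_mul]
    rcases hr with rfl | ⟨k, rfl⟩
    · exact Or.inl rfl
    · refine Or.inr ⟨k+1, by omega, ?_⟩
      unfold bval; push_cast; ring_nf
  rcases le_or_gt (t:ℝ) (3/4) with h3 | h3
  · exact Or.inr ⟨hx, by rw [yfun_eq_one h2.le h3]; rfl⟩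
  · refine Or.inl (Or.inl ⟨Or.inl ?_, ⟨yfun_nonneg _, yfun_le_one _⟩⟩)
    rw [cfun_eq_zero h3.le, zero_mul]; rfl

/-- Family of loops: around rectangle `n` for `r = bval n`, up-down the left edge for `r = 0`. -/
noncomputable def Lr (r : ℝ) (hr : r = 0 ∨ ∃ k : ℕ, r = bval k) : Path combP combP where
  toFun t := ⟨(cfun t * r, yfun t), memC hr t⟩
  continuous_toFun := by
    apply Continuous.subtype_mk
    exact ((cfun_cont.comp continuous_subtype_val).mul continuous_const).prodMk
      (yfun_cont.comp continuous_subtype_val)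
  source' := by
    apply Subtype.ext
    show (cfun ((0:I):ℝ) * r, yfun ((0:I):ℝ)) = ((0:ℝ), (0:ℝ))
    rw [Set.Icc.coe_zero, cfun_zero, yfun_zero, zero_mul]
  target' := by
    apply Subtype.ext
    show (cfun ((1:I):ℝ) * r, yfun ((1:I):ℝ)) = ((0:ℝ), (0:ℝ))
    rw [Set.Icc.coe_one, cfun_one, yfun_one, zero_mul]

lemma memQ (s t : I) : ((0:ℝ), (s:ℝ) * yfun t) ∈ comb :=
  mem_comb_left ⟨mul_nonneg s.2.1 (yfun_nonneg _),
    mul_le_one₀ s.2.2 (yfun_nonneg _) (yfun_le_one _)⟩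

lemma gamma_joined : Joined (Path.refl combP) (Lr 0 (Or.inl rfl)) := by
  refine ⟨{ toFun := fun s => { toFun := fun t => ⟨((0:ℝ), (s:ℝ) * yfun t), memQ s t⟩
                                continuous_toFun := by
                                  apply Continuous.subtype_mk
                                  exact continuous_const.prodMk
                                    (continuous_const.mul (yfun_cont.comp continuous_subtype_val))
                                source' := by
                                  apply Subtype.ext
                                  show ((0:ℝ), (s:ℝ) * yfun ((0:I):ℝ)) = ((0:ℝ), (0:ℝ))
                                  rw [Set.Icc.coe_zero, yfun_zero, mul_zero]
                                target' := by
                                  apply Subtype.ext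
                                  show ((0:ℝ), (s:ℝ) * yfun ((1:I):ℝ)) = ((0:ℝ), (0:ℝ))
                                  rw [Set.Icc.coe_one, yfun_one, mul_zero] }
            continuous_toFun := ?_
            source' := ?_
            target' := ?_ }⟩
  · rw [← Path.continuous_uncurry_iff]
    apply Continuous.subtype_mk
    exact continuous_const.prodMk
      ((continuous_subtype_val.comp continuous_fst).mul
        (yfun_cont.comp (continuous_subtype_val.comp continuous_snd)))
  · apply Path.ext
    funext t
    apply Subtype.ext
    show ((0:ℝ), ((0:I):ℝ) * yfun t) = (combP : ℝ × ℝ)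
    simp [combP]
  · apply Path.ext
    funext t
    apply Subtype.ext
    show ((0:ℝ), ((1:I):ℝ) * yfun t) = (cfun t * 0, yfun t)
    rw [Set.Icc.coe_one, one_mul, mul_zero]

/-! ### The winding map to the circle -/

noncomputable def gmap (n : ℕ) (x : ℝ) : ℝ :=
  max 0 (min ((x - aval n)/(bval n - aval n)) 1)
lemma gmap_cont (n : ℕ) : Continuous (gmap n) := by unfold gmap; fun_prop
lemma gmap_of_le {n : ℕ} {x : ℝ} (h : x ≤ aval n) : gmap n x = 0 := by
  unfold gmap
  apply max_eq_left
  refine le_trans (min_le_left _ _) (div_nonpos_of_nonpos_of_nonneg (by linarith) ?_)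
  linarith [aval_lt_bval n]
lemma gmap_of_ge {n : ℕ} {x : ℝ} (h : bval n ≤ x) : gmap n x = 1 := by
  unfold gmap
  rw [min_eq_right, max_eq_right zero_le_one]
  rw [le_div_iff₀ (by linarith [aval_lt_bval n])]
  linarith
lemma gmap_zero (n : ℕ) : gmap n 0 = 0 := gmap_of_le (aval_pos n).le
lemma gmap_bval (n : ℕ) : gmap n (bval n) = 1 := gmap_of_ge le_rfl

open scoped Classical in
/-- The winding map around rectangle `n`, into the circle `ℝ/ℤ`. -/
noncomputable def fmap (n : ℕ) : comb → AddCircle (1:ℝ) :=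
  ({q : comb | (q:ℝ×ℝ).2 = 0 ∨ bval n ≤ (q:ℝ×ℝ).1}).piecewise
    (fun q => ((gmap n (q:ℝ×ℝ).1 / 4 + (q:ℝ×ℝ).2 / 4 : ℝ) : AddCircle (1:ℝ)))
    (fun q => ((1/2 + (1 - gmap n (q:ℝ×ℝ).1)/4 + (1 - (q:ℝ×ℝ).2)/4 : ℝ) : AddCircle (1:ℝ)))

lemma fmap_cont (n : ℕ) : Continuous (fmap n) := by
  classical
  have hxc : Continuous fun q : comb => ((q:ℝ×ℝ).1 : ℝ) :=
    continuous_fst.comp continuous_subtype_val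
  have hyc : Continuous fun q : comb => ((q:ℝ×ℝ).2 : ℝ) :=
    continuous_snd.comp continuous_subtype_val
  have hproj : Continuous fun r : ℝ => ((r : AddCircle (1:ℝ))) := AddCircle.continuous_mk' 1
  have hA : Continuous fun q : comb =>
      ((gmap n (q:ℝ×ℝ).1 / 4 + (q:ℝ×ℝ).2 / 4 : ℝ) : AddCircle (1:ℝ)) := by
    apply hproj.comp
    exact (((gmap_cont n).comp hxc).div_const 4).add (hyc.div_const 4)
  have hB : Continuous fun q : comb =>
      ((1/2 + (1 - gmap n (q:ℝ×ℝ).1)/4 + (1 - (q:ℝ×ℝ).2)/4 : ℝ) : AddCircle (1:ℝ)) := by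
    apply hproj.comp
    exact (continuous_const.add (((continuous_const.sub ((gmap_cont n).comp hxc)).div_const 4))).add
      ((continuous_const.sub hyc).div_const 4)
  apply Continuous.piecewise _ hA hB
  intro q hq
  have hS : IsClosed {q : comb | (q:ℝ×ℝ).2 = 0 ∨ bval n ≤ (q:ℝ×ℝ).1} :=
    (isClosed_eq hyc continuous_const).union (isClosed_le continuous_const hxc)
  have hT : IsClosed {q : comb | (q:ℝ×ℝ).2 = 1 ∨ (q:ℝ×ℝ).1 ≤ aval n} :=
    (isClosed_eq hyc continuous_const).union (isClosed_le hxc continuous_const)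
  have h1 : q ∈ {q : comb | (q:ℝ×ℝ).2 = 0 ∨ bval n ≤ (q:ℝ×ℝ).1} := by
    rw [← hS.closure_eq]
    exact frontier_subset_closure hq
  have h2 : q ∈ {q : comb | (q:ℝ×ℝ).2 = 1 ∨ (q:ℝ×ℝ).1 ≤ aval n} := by
    have hsub : {q : comb | (q:ℝ×ℝ).2 = 0 ∨ bval n ≤ (q:ℝ×ℝ).1}ᶜ ⊆
        {q : comb | (q:ℝ×ℝ).2 = 1 ∨ (q:ℝ×ℝ).1 ≤ aval n} := by
      rintro ⟨⟨x, y⟩, hmem⟩ hnot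
      simp only [Set.mem_compl_iff, Set.mem_setOf_eq, not_or, not_le] at hnot
      obtain ⟨hy0, hxb⟩ := hnot
      rcases hmem with (⟨hx, -⟩ | ⟨-, hy⟩) | ⟨-, hy⟩
      · rcases hx with hx0 | ⟨k, hk1, hxk⟩
        · exact Or.inr (by simp only at hx0 ⊢; rw [hx0]; exact (aval_pos n).le)
        · refine Or.inr ?_
          simp only at hxk ⊢
          rw [hxk] at hxb ⊢
          have hk0 : (0:ℝ) < k := by
            have : 1 ≤ k := hk1
            exact_mod_cast Nat.lt_of_lt_of_le Nat.zero_lt_one this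
          have hkn : (n+1 : ℝ) < k := by
            unfold bval at hxb
            rw [div_lt_div_iff₀ hk0 (by positivity)] at hxb
            linarith
          unfold aval
          rw [div_le_div_iff₀ hk0 (by positivity)]
          have hkn' : n + 1 < k := by exact_mod_cast hkn
          have : ((n:ℝ) + 2) ≤ (k:ℝ) := by
            have : n + 2 ≤ k := by omega
            exact_mod_cast this
          linarith
      · exact absurd hy hy0
      · exact Or.inl hy
    have : closure ({q : comb | (q:ℝ×ℝ).2 = 0 ∨ bval n ≤ (q:ℝ×ℝ).1}ᶜ) ⊆
        {q : comb | (q:ℝ×ℝ).2 = 1 ∨ (q:ℝ×ℝ).1 ≤ aval n} := hT.closure_subset_iff.mpr hsub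
    exact this (frontier_subset_closure (s := _ᶜ) (by rwa [frontier_compl]))
  rcases h1 with hy0 | hxb <;> rcases h2 with hy1 | hxa
  · exfalso; rw [hy0] at hy1; norm_num at hy1
  · rw [hy0, gmap_of_le hxa]
    norm_num
    exact (AddCircle.coe_period (p := (1:ℝ))).symm
  · rw [hy1, gmap_of_ge hxb]
    norm_num
  · exact absurd (le_trans hxb hxa) (not_le.mpr (aval_lt_bval n))

/-- The real lift of the composed loop. -/
noncomputable def ufun (n : ℕ) (t : I) : ℝ :=
  (gmap n (min (4*(t:ℝ)) 1 * bval n) + max 0 (min (4*(t:ℝ) - 1) 1)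
    + (1 - gmap n (max 0 (min (3 - 4*(t:ℝ)) 1) * bval n)) + max 0 (min (4*(t:ℝ) - 3) 1)) / 4

lemma ufun_cont (n : ℕ) : Continuous (ufun n) := by
  unfold ufun
  have := gmap_cont n
  fun_prop

lemma ufun_zero (n : ℕ) : ufun n 0 = 0 := by
  unfold ufun
  norm_num [gmap_zero, gmap_bval]

lemma ufun_one (n : ℕ) : ufun n 1 = 1 := by
  unfold ufun
  norm_num [gmap_zero, gmap_bval]

lemma fmap_Lr (n : ℕ) (t : I) :
    fmap n ((Lr (bval n) (Or.inr ⟨n, rfl⟩)) t) = ((ufun n t : ℝ) : AddCircle (1:ℝ)) := by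
  classical
  set q : comb := (Lr (bval n) (Or.inr ⟨n, rfl⟩)) t with hq
  have hqv : (q : ℝ × ℝ) = (cfun t * bval n, yfun t) := rfl
  have ht0 : (0:ℝ) ≤ t := t.2.1
  have ht1 : (t:ℝ) ≤ 1 := t.2.2
  rcases le_or_gt (t:ℝ) (1/4) with h | h
  · -- bottom segment
    have hmem : q ∈ {q : comb | (q:ℝ×ℝ).2 = 0 ∨ bval n ≤ (q:ℝ×ℝ).1} :=
      Or.inl (by rw [hqv]; exact yfun_eq_zero h)
    rw [fmap, Set.piecewise_eq_of_mem _ _ _ hmem, hqv]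
    congr 1
    show gmap n (cfun ↑t * bval n) / 4 + yfun ↑t / 4 = ufun n t
    rw [yfun_eq_zero h, cfun_eq_A h]
    unfold ufun
    rw [max_eq_left (le_trans (min_le_left _ _) (by linarith : 4*(t:ℝ) - 1 ≤ 0)),
      min_eq_right (by linarith : (1:ℝ) ≤ 3 - 4*(t:ℝ)), max_eq_right (zero_le_one), one_mul,
      gmap_bval, max_eq_left (le_trans (min_le_left _ _) (by linarith : 4*(t:ℝ) - 3 ≤ 0))]
    ring
  rcases le_or_gt (t:ℝ) (1/2) with h2 | h2
  · -- right tooth, going up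
    have hmem : q ∈ {q : comb | (q:ℝ×ℝ).2 = 0 ∨ bval n ≤ (q:ℝ×ℝ).1} := by
      refine Or.inr ?_
      rw [hqv]
      show bval n ≤ cfun ↑t * bval n
      rw [cfun_eq_one h.le h2, one_mul]
    rw [fmap, Set.piecewise_eq_of_mem _ _ _ hmem, hqv]
    congr 1
    show gmap n (cfun ↑t * bval n) / 4 + yfun ↑t / 4 = ufun n t
    rw [cfun_eq_one h.le h2, one_mul, gmap_bval, yfun_eq_B h.le h2]
    unfold ufun
    rw [min_eq_right (by linarith : (1:ℝ) ≤ 4*(t:ℝ)), one_mul, gmap_bval,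
      min_eq_left (by linarith : 4*(t:ℝ) - 1 ≤ 1), max_eq_right (by linarith : (0:ℝ) ≤ 4*(t:ℝ) - 1),
      min_eq_right (by linarith : (1:ℝ) ≤ 3 - 4*(t:ℝ)), max_eq_right (zero_le_one), one_mul,
      gmap_bval, max_eq_left (le_trans (min_le_left _ _) (by linarith : 4*(t:ℝ) - 3 ≤ 0))]
    ring
  rcases le_or_gt (t:ℝ) (3/4) with h3 | h3
  · -- top, going left
    have hnot : q ∉ {q : comb | (q:ℝ×ℝ).2 = 0 ∨ bval n ≤ (q:ℝ×ℝ).1} := by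
      rintro (hy | hx)
      · rw [hqv] at hy
        simp only at hy
        rw [yfun_eq_one h2.le h3] at hy; norm_num at hy
      · rw [hqv] at hx
        simp only at hx
        have : cfun ↑t * bval n < 1 * bval n := by
          apply mul_lt_mul_of_pos_right _ (bval_pos n)
          rw [cfun_eq_C h2.le h3]; linarith
        rw [one_mul] at this
        exact absurd hx (not_le.mpr this)
    rw [fmap, Set.piecewise_eq_of_notMem _ _ _ hnot, hqv]
    congr 1
    show 1/2 + (1 - gmap n (cfun ↑t * bval n))/4 + (1 - yfun ↑t)/4 = ufun n t
    rw [cfun_eq_C h2.le h3, yfun_eq_one h2.le h3]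
    unfold ufun
    rw [min_eq_right (by linarith : (1:ℝ) ≤ 4*(t:ℝ)), one_mul, gmap_bval,
      min_eq_right (by linarith : (1:ℝ) ≤ 4*(t:ℝ) - 1), max_eq_right (zero_le_one),
      min_eq_left (by linarith : 3 - 4*(t:ℝ) ≤ 1), max_eq_right (by linarith : (0:ℝ) ≤ 3 - 4*(t:ℝ)),
      max_eq_left (le_trans (min_le_left _ _) (by linarith : 4*(t:ℝ) - 3 ≤ 0))]
    ring
  rcases lt_or_eq_of_le ht1 with h4 | h4
  · -- left edge, going down (t < 1)
    have hnot : q ∉ {q : comb | (q:ℝ×ℝ).2 = 0 ∨ bval n ≤ (q:ℝ×ℝ).1} := by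
      rintro (hy | hx)
      · rw [hqv] at hy
        simp only at hy
        rw [yfun_eq_D h3.le ht1] at hy
        linarith
      · rw [hqv] at hx
        simp only at hx
        rw [cfun_eq_zero h3.le, zero_mul] at hx
        exact absurd hx (not_le.mpr (bval_pos n))
    rw [fmap, Set.piecewise_eq_of_notMem _ _ _ hnot, hqv]
    congr 1
    show 1/2 + (1 - gmap n (cfun ↑t * bval n))/4 + (1 - yfun ↑t)/4 = ufun n t
    rw [cfun_eq_zero h3.le, zero_mul, gmap_zero, yfun_eq_D h3.le ht1]
    unfold ufun
    rw [min_eq_right (by linarith : (1:ℝ) ≤ 4*(t:ℝ)), one_mul, gmap_bval,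
      min_eq_right (by linarith : (1:ℝ) ≤ 4*(t:ℝ) - 1), max_eq_right (zero_le_one),
      max_eq_left (le_trans (min_le_left _ _) (by linarith : 3 - 4*(t:ℝ) ≤ 0)),
      zero_mul, gmap_zero,
      min_eq_left (by linarith : 4*(t:ℝ) - 3 ≤ 1), max_eq_right (by linarith : (0:ℝ) ≤ 4*(t:ℝ) - 3)]
    ring
  · -- t = 1
    have hmem : q ∈ {q : comb | (q:ℝ×ℝ).2 = 0 ∨ bval n ≤ (q:ℝ×ℝ).1} :=
      Or.inl (by rw [hqv]; show yfun ↑t = 0; rw [h4, yfun_one])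
    rw [fmap, Set.piecewise_eq_of_mem _ _ _ hmem, hqv]
    show ((gmap n (cfun ↑t * bval n) / 4 + yfun ↑t / 4 : ℝ) : AddCircle (1:ℝ)) = _
    have hu1 : ufun n t = 1 := by
      have : t = (1 : I) := Subtype.ext (by rw [h4]; norm_num)
      rw [this]; exact ufun_one n
    rw [h4, cfun_one, yfun_one, zero_mul, gmap_zero, hu1]
    norm_num
    exact (AddCircle.coe_period (p := (1:ℝ))).symm

lemma fmap_combP (n : ℕ) : fmap n combP = 0 := by
  classical
  have hmem : (combP : comb) ∈ {q : comb | (q:ℝ×ℝ).2 = 0 ∨ bval n ≤ (q:ℝ×ℝ).1} := Or.inl rfl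
  rw [fmap, Set.piecewise_eq_of_mem _ _ _ hmem]
  show ((gmap n (0:ℝ) / 4 + (0:ℝ) / 4 : ℝ) : AddCircle (1:ℝ)) = 0
  rw [gmap_zero]
  norm_num

lemma joined_homotopic {X : Type*} [TopologicalSpace X] {x y : X} {p q : Path x y}
    (h : Joined p q) : p.Homotopic q := by
  obtain ⟨P⟩ := h
  refine ⟨⟨⟨⟨fun st => P st.1 st.2, ?_⟩, ?_, ?_⟩, ?_⟩⟩
  · exact Path.continuous_uncurry_iff.mpr P.continuous
  · intro t; show (P 0) t = p t; rw [P.source]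
  · intro t; show (P 1) t = q t; rw [P.target]
  · intro s x hx
    rcases hx with h0 | h1
    · show (P s) x = p x
      rw [h0, (P s).source, p.source]
    · rw [Set.mem_singleton_iff] at h1
      show (P s) x = p x
      rw [h1, (P s).target, p.target]

/-- The path component of the constant loop is not open in the loop space `C_p(X)`. -/
theorem stmt2 : ¬ IsOpen (pathComponent (Path.refl combP)) := by
  intro hO
  -- the left-edge loop is in the path component of the constant loop
  have hγ : (Lr 0 (Or.inl rfl)) ∈ pathComponent (Path.refl combP) := gamma_joined
  have hnb : pathComponent (Path.refl combP) ∈ 𝓝 (Lr 0 (Or.inl rfl)) := hO.mem_nhds hγ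
  -- the family of loops over K = {0} ∪ {1/(k+1)}
  set K : Set ℝ := insert 0 {x : ℝ | ∃ k : ℕ, x = bval k} with hK
  have memK : ∀ r : K, (r:ℝ) = 0 ∨ ∃ k : ℕ, (r:ℝ) = bval k := by
    rintro ⟨r, hr⟩
    rcases hr with rfl | hr
    · exact Or.inl rfl
    · exact Or.inr hr
  set Φ : K → Path combP combP := fun r => Lr r (memK r) with hΦ
  have hΦc : Continuous Φ := by
    rw [← Path.continuous_uncurry_iff]
    apply Continuous.subtype_mk
    refine Continuous.prodMk ?_ ?_
    · exact ((cfun_cont.comp (continuous_subtype_val.comp continuous_snd)).mul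
        (continuous_subtype_val.comp continuous_fst))
    · exact yfun_cont.comp (continuous_subtype_val.comp continuous_snd)
  -- zero is in K, and the sequence bval k → 0 in K
  have h0K : (0:ℝ) ∈ K := Set.mem_insert _ _
  have hbK : ∀ k : ℕ, bval k ∈ K := fun k => Set.mem_insert_iff.mpr (Or.inr ⟨k, rfl⟩)
  have hseq : Filter.Tendsto (fun k : ℕ => (⟨bval k, hbK k⟩ : K)) Filter.atTop
      (𝓝 (⟨0, h0K⟩ : K)) := by
    rw [tendsto_subtype_rng]
    exact tendsto_one_div_add_atTop_nhds_zero_nat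
  have hΦ0 : Φ ⟨0, h0K⟩ = Lr 0 (Or.inl rfl) := rfl
  have htend : Filter.Tendsto (fun k : ℕ => Φ ⟨bval k, hbK k⟩) Filter.atTop
      (𝓝 (Lr 0 (Or.inl rfl))) := by
    rw [← hΦ0]
    exact (hΦc.tendsto _).comp hseq
  have hev : ∀ᶠ k : ℕ in Filter.atTop, Φ ⟨bval k, hbK k⟩ ∈ pathComponent (Path.refl combP) :=
    htend hnb
  obtain ⟨k, hk⟩ := hev.exists
  -- so the k-th rectangle loop is null-homotopic; derive a contradiction by winding
  have hkk : Φ ⟨bval k, hbK k⟩ = Lr (bval k) (Or.inr ⟨k, rfl⟩) := rfl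
  rw [hkk] at hk
  have hhom : (Path.refl combP).Homotopic (Lr (bval k) (Or.inr ⟨k, rfl⟩)) := joined_homotopic hk
  set f : C(comb, AddCircle (1:ℝ)) := ⟨fmap k, fmap_cont k⟩ with hf
  have hmapped := hhom.map f
  have hre : (Path.refl combP).map f.continuous = Path.refl (f combP) := by
    apply Path.ext; rfl
  rw [hre] at hmapped
  refine no_winding ((Lr (bval k) (Or.inr ⟨k, rfl⟩)).map f.continuous) (ufun k) (ufun_cont k)
    ?_ ?_ hmapped.symm
  · intro t
    rw [Path.map_coe]
    exact fmap_Lr k t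
  · rw [ufun_one, ufun_zero]; norm_num
end

section
/- Let X be a metrizable space and p ∈ X. If the topological fundamental group π₁(X,p) is discrete (i.e., the trivial class is open), then X is semilocally simply connected at p. -/
open Topology Filter unitInterval

instance ZerothHomotopy.instTopologicalSpaceQuot (X : Type*) [TopologicalSpace X] :
    TopologicalSpace (ZerothHomotopy X) :=
  inferInstanceAs (TopologicalSpace (Quotient _))

/-- Paths joined in the loop space are homotopic rel endpoints. -/
lemma joined_to_homotopic {X : Type*} [TopologicalSpace X] {p : X} {γ₀ γ₁ : Path p p}
    (h : Joined γ₀ γ₁) : γ₀.Homotopic γ₁ := by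
  obtain ⟨Γ⟩ := h
  refine ⟨{ toFun := fun st => Γ st.1 st.2
            continuous_toFun := ?_
            map_zero_left := fun t => by simp
            map_one_left := fun t => by simp
            prop' := fun s t ht => ?_ }⟩
  · exact Continuous.eval (Γ.continuous.comp continuous_fst) continuous_snd
  · rcases ht with ht | ht <;> subst ht <;> simp

theorem stmt4 {X : Type*} [TopologicalSpace X] [TopologicalSpace.MetrizableSpace X] (p : X)
    (h : DiscreteTopology (ZerothHomotopy (Path p p))) :
    SemilocallySimplyConnectedAt X p := by
  letI := TopologicalSpace.metrizableSpaceMetric X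
  -- the set of loops joined to the constant loop is open in the loop space
  have hV : IsOpen {γ : Path p p | Joined γ (Path.refl p)} := by
    letI : Setoid (Path p p) := pathSetoid (Path p p)
    have hop : IsOpen ({⟦Path.refl p⟧} : Set (ZerothHomotopy (Path p p))) := isOpen_discrete _
    have h2 := hop.preimage (continuous_quotient_mk' : Continuous (Quotient.mk' : Path p p → ZerothHomotopy (Path p p)))
    convert h2 using 1
    ext γ
    simp only [Set.mem_setOf_eq, Set.mem_preimage, Set.mem_singleton_iff]
    exact ⟨fun H => Quotient.sound H, fun H => Quotient.exact H⟩
  -- pull back to an open set in `C(I, X)`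
  rw [isOpen_induced_iff] at hV
  obtain ⟨W, hW, hWV⟩ := hV
  have hmem : (Path.refl p).toContinuousMap ∈ W := by
    have : Path.refl p ∈ ((↑) : Path p p → C(I, X)) ⁻¹' W := by
      rw [hWV]; exact Joined.refl _
    exact this
  obtain ⟨ε, hε, hball⟩ := Metric.isOpen_iff.mp hW _ hmem
  refine ⟨Metric.ball p ε, Metric.isOpen_ball, Metric.mem_ball_self hε, fun γ hγ => ?_⟩
  have hd : dist γ.toContinuousMap (Path.refl p).toContinuousMap < ε := by
    rw [ContinuousMap.dist_lt_iff hε]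
    intro t
    simpa [Path.refl] using hγ t
  have : γ ∈ ((↑) : Path p p → C(I, X)) ⁻¹' W := hball hd
  rw [hWV] at this
  exact joined_to_homotopic this
end

section
/- Let X be a metric space, f, g : [0,1] → X loops at p, and suppose there exist partitions 0 = t₀ < t₁ < ⋯ < t_k = 1 and paths βᵢ from f(tᵢ) to g(tᵢ) with β₀ and β_k constant, such that for each i the loop formed by f|[tᵢ,tᵢ₊₁], βᵢ₊₁, the reverse of g|[tᵢ,tᵢ₊₁], and the reverse of βᵢ is null-homotopic in X. Then f and g are homotopic rel endpoints in X. -/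
open Topology Filter unitInterval CategoryTheory

attribute [local instance] Path.Homotopic.setoid

namespace Stmt15Aux

variable {X : Type*} [TopologicalSpace X] {a b c d : X}

/-- A path as a morphism in the fundamental groupoid. -/
def homOf (p : Path a b) : FundamentalGroupoid.mk a ⟶ FundamentalGroupoid.mk b := ⟦p⟧

lemma homOf_trans (p : Path a b) (q : Path b c) :
    homOf (p.trans q) = homOf p ≫ homOf q := rfl

lemma homOf_symm (p : Path a b) : homOf p.symm = inv (homOf p) := by
  rw [← Groupoid.inv_eq_inv]; rfl

lemma homOf_refl : homOf (Path.refl a) = 𝟙 (FundamentalGroupoid.mk a) := rfl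

lemma homOf_eq_of_homotopic {p q : Path a b} (h : p.Homotopic q) : homOf p = homOf q :=
  Quotient.sound h

lemma homotopic_of_homOf_eq {p q : Path a b} (h : homOf p = homOf q) : p.Homotopic q :=
  Quotient.exact h

lemma homOf_cast {a' b' : X} (γ : Path a b) (ha : a' = a) (hb : b' = b) :
    homOf (γ.cast ha hb) =
      eqToHom (by rw [ha]) ≫ homOf γ ≫ eqToHom (by rw [hb]) := by
  subst ha; subst hb
  simp only [eqToHom_refl, Category.comp_id, Category.id_comp]
  congr 1

lemma truncateOfLE_apply (γ : Path a b) {t₀ t₁ : ℝ} (h : t₀ ≤ t₁) (s : unitInterval) :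
    γ.truncateOfLE h s = γ.extend (min (max ↑s t₀) t₁) := rfl

/-- Concatenating two truncations of a path is homotopic to the big truncation. -/
lemma truncate_trans_homotopic (γ : Path a b) {t₀ t₁ t₂ : ℝ}
    (h01 : t₀ ≤ t₁) (h12 : t₁ ≤ t₂) (h0 : 0 ≤ t₁) (h1 : t₁ ≤ 1) :
    ((γ.truncateOfLE h01).trans (γ.truncateOfLE h12)).Homotopic
      (γ.truncateOfLE (h01.trans h12)) := by
  have hmem : ∀ s : unitInterval, max (min (2 * (s : ℝ)) t₁) (2 * (s : ℝ) - 1) ∈ I := by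
    intro s
    constructor
    · exact le_max_of_le_left (le_min (by have := s.2.1; linarith) h0)
    · exact max_le (min_le_of_right_le h1) (by have := s.2.2; linarith)
  set φ : unitInterval → unitInterval :=
    fun s => ⟨max (min (2 * (s : ℝ)) t₁) (2 * (s : ℝ) - 1), hmem s⟩ with hφ
  have φcont : Continuous φ := by
    apply Continuous.subtype_mk
    fun_prop
  have φ0 : φ 0 = 0 := by
    apply Subtype.ext
    show (2 * (0 : ℝ)) ⊓ t₁ ⊔ (2 * (0 : ℝ) - 1) = (0 : ℝ)
    rw [mul_zero, min_eq_left h0, max_eq_left (by norm_num)]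
  have φ1 : φ 1 = 1 := by
    apply Subtype.ext
    show (2 * (1 : ℝ)) ⊓ t₁ ⊔ (2 * (1 : ℝ) - 1) = (1 : ℝ)
    rw [show (2 : ℝ) * 1 = 2 by norm_num, min_eq_right (by linarith : t₁ ≤ 2),
      show (2 : ℝ) - 1 = 1 by norm_num, max_eq_right h1]
  have heq : (γ.truncateOfLE (h01.trans h12)).reparam φ φcont φ0 φ1 =
      (γ.truncateOfLE h01).trans (γ.truncateOfLE h12) := by
    ext s
    have hs0 : (0 : ℝ) ≤ s := s.2.1
    have hs1 : (s : ℝ) ≤ 1 := s.2.2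
    rw [Path.trans_apply]
    split_ifs with hs
    · show γ.extend (min (max ↑(φ s) t₀) t₂) = γ.extend (min (max (2 * (s : ℝ)) t₀) t₁)
      congr 1
      simp only [hφ]
      simp only [min_def, max_def]
      split_ifs <;> linarith
    · show γ.extend (min (max ↑(φ s) t₀) t₂) = γ.extend (min (max (2 * (s : ℝ) - 1) t₁) t₂)
      congr 1
      simp only [hφ]
      simp only [min_def, max_def]
      split_ifs <;> linarith
  have H : (γ.truncateOfLE (h01.trans h12)).Homotopic
      ((γ.truncateOfLE (h01.trans h12)).reparam φ φcont φ0 φ1) :=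
    ⟨Path.Homotopy.reparam (γ.truncateOfLE (h01.trans h12)) φ φcont φ0 φ1⟩
  rw [heq] at H
  exact H.symm

/-- Rearranging the null-homotopic rectangle boundary. -/
lemma rect (u : Path a b) (v : Path b c) (w : Path d c) (x : Path a d)
    (hyp : (((u.trans v).trans w.symm).trans x.symm).Homotopic (Path.refl a)) :
    homOf u ≫ homOf v = homOf x ≫ homOf w := by
  have h1 := homOf_eq_of_homotopic hyp
  rw [homOf_trans, homOf_trans, homOf_trans, homOf_symm, homOf_symm, homOf_refl] at h1
  rw [IsIso.comp_inv_eq, Category.id_comp, IsIso.comp_inv_eq] at h1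
  exact h1

end Stmt15Aux

open Stmt15Aux

/-- The "filling in rectangles" lemma: if loops `f` and `g` at `p` admit a partition
`0 = t₀ < t₁ < ⋯ < t_k = 1` and connecting paths `βᵢ` from `f(tᵢ)` to `g(tᵢ)` with `β₀`
and `β_k` constant, such that each rectangle boundary loop
`f|[tᵢ,tᵢ₊₁] ⬝ βᵢ₊₁ ⬝ (g|[tᵢ,tᵢ₊₁])⁻¹ ⬝ βᵢ⁻¹` is null-homotopic, then `f ≃ g` rel endpoints. -/
theorem stmt15 {X : Type*} [MetricSpace X] {p : X} (f g : Path p p)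
    (k : ℕ) (t : Fin (k + 1) → unitInterval) (htmono : StrictMono t)
    (ht0 : t 0 = 0) (htk : t (Fin.last k) = 1)
    (β : ∀ i : Fin (k + 1), Path (f.extend (t i)) (g.extend (t i)))
    (hβ0 : ∀ s, β 0 s = p) (hβk : ∀ s, β (Fin.last k) s = p)
    (h : ∀ i : Fin k,
      haveI hle : ((t i.castSucc : ℝ)) ≤ ((t i.succ : ℝ)) := by
        exact_mod_cast (htmono (show i.castSucc < i.succ from Fin.castSucc_lt_succ)).le
      ((((f.truncateOfLE hle).trans (β i.succ)).trans
            (g.truncateOfLE hle).symm).trans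
          (β i.castSucc).symm).Homotopic
        (Path.refl (f.extend (t i.castSucc)))) :
    f.Homotopic g := by
  have h0i : ∀ i : Fin (k + 1), ((t 0 : ℝ)) ≤ ((t i : ℝ)) := fun i => by
    exact_mod_cast htmono.monotone (Fin.zero_le i)
  set F : ∀ i : Fin (k + 1), Path (f.extend (t 0)) (f.extend (t i)) :=
    fun i => f.truncateOfLE (h0i i) with hF
  set G : ∀ i : Fin (k + 1), Path (g.extend (t 0)) (g.extend (t i)) :=
    fun i => g.truncateOfLE (h0i i) with hG
  have claim : ∀ i : Fin (k + 1),
      homOf ((F i).trans (β i)) = homOf ((β 0).trans (G i)) := by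
    intro i
    induction i using Fin.induction with
    | zero =>
      have hF0 : F 0 = Path.refl (f.extend (t 0)) := by
        ext s
        show f.extend (min (max ↑s ↑(t 0)) ↑(t 0)) = f.extend ↑(t 0)
        rw [min_eq_right (le_max_right _ _)]
      have hG0 : G 0 = Path.refl (g.extend (t 0)) := by
        ext s
        show g.extend (min (max ↑s ↑(t 0)) ↑(t 0)) = g.extend ↑(t 0)
        rw [min_eq_right (le_max_right _ _)]
      rw [homOf_trans, homOf_trans, hF0, hG0, homOf_refl, homOf_refl,
        Category.id_comp, Category.comp_id]
    | succ i ih =>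
      have hle : ((t i.castSucc : ℝ)) ≤ ((t i.succ : ℝ)) := by
        exact_mod_cast (htmono (show i.castSucc < i.succ from Fin.castSucc_lt_succ)).le
      have hAf : homOf (F i.succ) = homOf (F i.castSucc) ≫ homOf (f.truncateOfLE hle) := by
        rw [← homOf_trans]
        exact (homOf_eq_of_homotopic
          (truncate_trans_homotopic f (h0i i.castSucc) hle
            (t i.castSucc).2.1 (t i.castSucc).2.2)).symm
      have hAg : homOf (G i.succ) = homOf (G i.castSucc) ≫ homOf (g.truncateOfLE hle) := by
        rw [← homOf_trans]
        exact (homOf_eq_of_homotopic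
          (truncate_trans_homotopic g (h0i i.castSucc) hle
            (t i.castSucc).2.1 (t i.castSucc).2.2)).symm
      have hB : homOf (f.truncateOfLE hle) ≫ homOf (β i.succ) =
          homOf (β i.castSucc) ≫ homOf (g.truncateOfLE hle) :=
        rect _ _ _ _ (h i)
      calc homOf ((F i.succ).trans (β i.succ))
          = homOf (F i.succ) ≫ homOf (β i.succ) := homOf_trans _ _
        _ = homOf (F i.castSucc) ≫ (homOf (f.truncateOfLE hle) ≫ homOf (β i.succ)) := by
            rw [hAf, Category.assoc]
        _ = homOf (F i.castSucc) ≫ (homOf (β i.castSucc) ≫ homOf (g.truncateOfLE hle)) := by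
            rw [hB]
        _ = homOf ((F i.castSucc).trans (β i.castSucc)) ≫ homOf (g.truncateOfLE hle) := by
            rw [homOf_trans, Category.assoc]
        _ = homOf ((β 0).trans (G i.castSucc)) ≫ homOf (g.truncateOfLE hle) := by rw [ih]
        _ = homOf (β 0) ≫ homOf (G i.succ) := by
            rw [homOf_trans, Category.assoc, ← hAg]
        _ = homOf ((β 0).trans (G i.succ)) := (homOf_trans _ _).symm
  -- endpoint identifications
  have ht0' : ((t 0 : ℝ)) = 0 := by rw [ht0]; rfl
  have htk' : ((t (Fin.last k) : ℝ)) = 1 := by rw [htk]; rfl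
  have hf0 : f.extend ↑(t 0) = p := by rw [ht0']; exact f.extend_zero
  have hg0 : g.extend ↑(t 0) = p := by rw [ht0']; exact g.extend_zero
  have hf1 : f.extend ↑(t (Fin.last k)) = p := by rw [htk']; exact f.extend_one
  have hg1 : g.extend ↑(t (Fin.last k)) = p := by rw [htk']; exact g.extend_one
  have hFlast : F (Fin.last k) = f.cast hf0 hf1 := by
    ext s
    show f.extend (min (max ↑s ↑(t 0)) ↑(t (Fin.last k))) = f s
    rw [ht0', htk', max_eq_left s.2.1, min_eq_left s.2.2, f.extend_extends']
  have hGlast : G (Fin.last k) = g.cast hg0 hg1 := by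
    ext s
    show g.extend (min (max ↑s ↑(t 0)) ↑(t (Fin.last k))) = g s
    rw [ht0', htk', max_eq_left s.2.1, min_eq_left s.2.2, g.extend_extends']
  have hβ0' : β 0 = (Path.refl p).cast hf0 hg0 := by
    ext s; exact hβ0 s
  have hβk' : β (Fin.last k) = (Path.refl p).cast hf1 hg1 := by
    ext s; exact hβk s
  have E := claim (Fin.last k)
  rw [homOf_trans, homOf_trans, hFlast, hGlast, hβ0', hβk',
    homOf_cast, homOf_cast, homOf_cast, homOf_cast, homOf_refl] at E
  simp only [Category.assoc, eqToHom_trans, eqToHom_trans_assoc, eqToHom_refl,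
    Category.comp_id, Category.id_comp] at E
  rw [cancel_epi, cancel_mono] at E
  exact homotopic_of_homOf_eq E
end
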